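/- Let f = f_0 + ... + f_e + f_d be the weighted homogeneous decomposition of a polynomial f with respect to positive weights w, with f_d ≠ 0 the top-degree component, f_e ≠ 0, and f_j = 0 for e < j < d. If p(t) = Σ_{m ≥ s} t^m * c_m is a formal Laurent path written via the weighted ℂ*-action (with c_s = c_0 ≠ 0, s < 0) such that f(p(t)) is bounded as t → 0 and the gradient identity df(p(t))/dt = Σ_i f_{x_i}(p(t)) p_i'(t) yields df(p(t)) − Σ_i w_i f_{x_i}(p(t)) p_i(t) = (d−e) f_e(p(t)) + higher order terms, then the leading coefficient satisfies f_e(c_0) = 0. -/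

import Mathlib

open MvPolynomial Finset

namespace LPLaux

lemma coeff_mul_of_lt {x y : LaurentSeries ℂ} {r r' : ℤ}
    (hx : ∀ k < r, x.coeff k = 0) (hy : ∀ k < r', y.coeff k = 0)
    {a : ℤ} (ha : a < r + r') : (x * y).coeff a = 0 := by
  rw [HahnSeries.coeff_mul]
  refine Finset.sum_eq_zero fun ij hij => ?_
  rw [Finset.mem_addAntidiagonal] at hij
  by_cases h1 : ij.1 < r
  · rw [hx _ h1, zero_mul]
  · have h2 : ij.2 < r' := by omega
    rw [hy _ h2, mul_zero]

lemma coeff_mul_lead {x y : LaurentSeries ℂ} {r r' : ℤ}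
    (hx : ∀ k < r, x.coeff k = 0) (hy : ∀ k < r', y.coeff k = 0) :
    (x * y).coeff (r + r') = x.coeff r * y.coeff r' := by
  by_cases hx0 : x.coeff r = 0
  · rw [hx0, zero_mul]
    rw [HahnSeries.coeff_mul]
    refine Finset.sum_eq_zero fun ij hij => ?_
    rw [Finset.mem_addAntidiagonal] at hij
    by_cases h1 : ij.1 < r
    · rw [hx _ h1, zero_mul]
    · by_cases h1' : ij.1 = r
      · rw [h1', hx0, zero_mul]
      · have h2 : ij.2 < r' := by omega
        rw [hy _ h2, mul_zero]
  by_cases hy0 : y.coeff r' = 0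
  · rw [hy0, mul_zero]
    rw [HahnSeries.coeff_mul]
    refine Finset.sum_eq_zero fun ij hij => ?_
    rw [Finset.mem_addAntidiagonal] at hij
    by_cases h2 : ij.2 < r'
    · rw [hy _ h2, mul_zero]
    · by_cases h2' : ij.2 = r'
      · rw [h2', hy0, mul_zero]
      · have h1 : ij.1 < r := by omega
        rw [hx _ h1, zero_mul]
  rw [HahnSeries.coeff_mul]
  rw [Finset.sum_eq_single (r, r')]
  · intro ij hij hne
    rw [Finset.mem_addAntidiagonal] at hij
    by_cases h1 : ij.1 < r
    · rw [hx _ h1, zero_mul]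
    · have h2 : ij.2 < r' := by
        rcases lt_or_eq_of_le (not_lt.mp h1) with h | h
        · omega
        · exfalso; apply hne; have : ij.2 = r' := by omega
          exact Prod.ext h.symm this
      rw [hy _ h2, mul_zero]
  · intro h
    exfalso
    exact h (Finset.mem_addAntidiagonal.mpr ⟨hx0, hy0, rfl⟩)

lemma coeff_prod {ι : Type*} [DecidableEq ι] (t : Finset ι) (x : ι → LaurentSeries ℂ) (r : ι → ℤ)
    (h : ∀ i ∈ t, ∀ k < r i, (x i).coeff k = 0) :
    (∀ k < ∑ i ∈ t, r i, (∏ i ∈ t, x i).coeff k = 0) ∧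
      (∏ i ∈ t, x i).coeff (∑ i ∈ t, r i) = ∏ i ∈ t, (x i).coeff (r i) := by
  induction t using Finset.induction with
  | empty =>
      constructor
      · intro k hk
        simp only [Finset.prod_empty, Finset.sum_empty] at *
        rw [HahnSeries.coeff_one, if_neg (by omega)]
      · simp [HahnSeries.coeff_one]
  | @insert a t ha ih =>
      have ih' := ih (fun i hi => h i (Finset.mem_insert_of_mem hi))
      have hxa := h a (Finset.mem_insert_self a t)
      rw [Finset.prod_insert ha, Finset.sum_insert ha, Finset.prod_insert ha]
      exact ⟨fun k hk => coeff_mul_of_lt hxa ih'.1 hk,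
        by rw [coeff_mul_lead hxa ih'.1, ih'.2]⟩

lemma coeff_pow {x : LaurentSeries ℂ} {r : ℤ} (hx : ∀ k < r, x.coeff k = 0) (m : ℕ) :
    (∀ k < (m : ℤ) * r, (x ^ m).coeff k = 0) ∧ (x ^ m).coeff ((m : ℤ) * r) = x.coeff r ^ m := by
  induction m with
  | zero =>
      constructor
      · intro k hk
        simp only [pow_zero, Nat.cast_zero, zero_mul] at *
        rw [HahnSeries.coeff_one, if_neg (by omega)]
      · simp [HahnSeries.coeff_one]
  | succ m ih =>
      have h1 : ((m + 1 : ℕ) : ℤ) * r = (m : ℤ) * r + r := by push_cast; ring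
      rw [pow_succ, pow_succ, h1]
      exact ⟨fun k hk => coeff_mul_of_lt ih.1 hx hk,
        by rw [coeff_mul_lead ih.1 hx, ih.2]⟩

lemma euler_monomial {σ : Type*} [Fintype σ] [DecidableEq σ] (w : σ → ℕ) (m : σ →₀ ℕ) (a : ℂ) :
    ∑ i, (C ((w i : ℕ) : ℂ)) * (X i * pderiv i (monomial m a)) =
      C ((Finsupp.weight w m : ℕ) : ℂ) * monomial m a := by
  have hweight : ((Finsupp.weight w m : ℕ) : ℂ) = ∑ i, ((m i * w i : ℕ) : ℂ) := by
    rw [Finsupp.weight_apply, Finsupp.sum_fintype]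
    · push_cast; simp [smul_eq_mul]
    · intro i; simp
  rw [hweight, map_sum, Finset.sum_mul]
  refine Finset.sum_congr rfl fun i _ => ?_
  rw [pderiv_monomial]
  by_cases hmi : m i = 0
  · simp [hmi]
  · have hX : (X i : MvPolynomial σ ℂ) = monomial (Finsupp.single i 1) 1 := rfl
    rw [hX, monomial_mul, C_mul_monomial, C_mul_monomial]
    have hsingle : Finsupp.single i 1 + (m - Finsupp.single i 1) = m := by
      ext j
      by_cases hj : j = i
      · subst hj
        simp only [Finsupp.add_apply, Finsupp.single_eq_same, Finsupp.tsub_apply]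
        omega
      · simp [Finsupp.single_eq_of_ne' (Ne.symm hj), Finsupp.tsub_apply]
    rw [hsingle]
    congr 1
    push_cast
    ring

end LPLaux

/-- The key coefficient computation in Lemma 1 of the paper.  A formal Laurent path
`p(t) = Σ_{m ≥ s} t^m * c_m` (written via the weighted `ℂ*`-action, so the `i`-th
coordinate of `p` is a Laurent series whose exponents are multiples of `w i` at least
`s * w i`, with leading coefficient `c0 i` at `s * w i`), with `s < 0` and `c0 ≠ 0`,
along which `f` is bounded as `t → 0` (no negative-order terms in `f(p(t))`) and the
gradient of `f` vanishes (so that `d·f(p(t)) − Σ w_i f_{x_i}(p(t)) p_i(t)` reduces to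
`(d−e) f_e(p(t)) + higher order terms`), forces `f_e(c0) = 0`. -/
theorem laurent_path_leading_coefficient (n : ℕ) (w : Fin (n + 1) → ℕ) (hw : ∀ i, 0 < w i)
    (f : MvPolynomial (Fin (n + 1)) ℂ) (d e : ℕ) (he : 0 < e) (hed : e < d)
    (htop : f.weightedTotalDegree w = d)
    (hfd : weightedHomogeneousComponent w d f ≠ 0)
    (hgap : ∀ j : ℕ, e < j → j < d → weightedHomogeneousComponent w j f = 0)
    (s : ℤ) (hs : s < 0) (c0 : Fin (n + 1) → ℂ) (hc0 : c0 ≠ 0)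
    (p : Fin (n + 1) → LaurentSeries ℂ)
    (hp_supp : ∀ i, ∀ k : ℤ, (p i).coeff k ≠ 0 → (w i : ℤ) ∣ k ∧ s * (w i : ℤ) ≤ k)
    (hp_lead : ∀ i, (p i).coeff (s * (w i : ℤ)) = c0 i)
    (hbound : ∀ k : ℤ, k < 0 → ((aeval p f : LaurentSeries ℂ)).coeff k = 0)
    (hgrad : ∀ i, aeval p (pderiv i f) = 0) :
    eval c0 (weightedHomogeneousComponent w e f) = 0 := by
  classical
  -- the leading-order analysis of each monomial evaluated along the path
  have key : ∀ m : Fin (n + 1) →₀ ℕ,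
      (∀ k < s * ((Finsupp.weight w m : ℕ) : ℤ), (∏ i, p i ^ m i).coeff k = 0) ∧
      (∏ i, p i ^ m i).coeff (s * ((Finsupp.weight w m : ℕ) : ℤ)) = ∏ i, c0 i ^ m i := by
    intro m
    have hpb : ∀ i, ∀ k < s * (w i : ℤ), (p i).coeff k = 0 := by
      intro i k hk
      by_contra h
      exact absurd (hp_supp i k h).2 (not_le.mpr hk)
    have hfac := fun i => LPLaux.coeff_pow (hpb i) (m i)
    have hsum : ∑ i, (m i : ℤ) * (s * (w i : ℤ)) = s * ((Finsupp.weight w m : ℕ) : ℤ) := by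
      have hcast : ((Finsupp.weight w m : ℕ) : ℤ) = ∑ i, (m i : ℤ) * (w i : ℤ) := by
        rw [Finsupp.weight_apply, Finsupp.sum_fintype]
        · push_cast; rfl
        · intro i; simp
      rw [hcast, Finset.mul_sum]
      exact Finset.sum_congr rfl fun i _ => by ring
    have hprod := LPLaux.coeff_prod Finset.univ (fun i => p i ^ m i)
      (fun i => (m i : ℤ) * (s * (w i : ℤ))) (fun i _ => (hfac i).1)
    rw [hsum] at hprod
    refine ⟨hprod.1, ?_⟩
    rw [hprod.2]
    exact Finset.prod_congr rfl fun i _ => by rw [(hfac i).2, hp_lead]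
  have hse : s * (e : ℤ) < 0 := mul_neg_of_neg_of_pos hs (by exact_mod_cast he)
  -- coefficient of a sum of Laurent series
  have hcoeffsum : ∀ (t : Finset (Fin (n + 1) →₀ ℕ)) (F : (Fin (n + 1) →₀ ℕ) → LaurentSeries ℂ)
      (k : ℤ), (∑ m ∈ t, F m).coeff k = ∑ m ∈ t, (F m).coeff k := fun t F k =>
    map_sum (HahnSeries.coeff.addMonoidHom k) F t
  have hmono : ∀ (m : Fin (n + 1) →₀ ℕ) (a : ℂ) (k : ℤ),
      ((aeval p (monomial m a) : LaurentSeries ℂ)).coeff k = a * (∏ i, p i ^ m i).coeff k := by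
    intro m a k
    rw [aeval_monomial, Finsupp.prod_pow, HahnSeries.algebraMap_apply',
      show algebraMap ℂ (PowerSeries ℂ) a = PowerSeries.C a from rfl,
      HahnSeries.ofPowerSeries_C, HahnSeries.C_apply, HahnSeries.coeff_single_zero_mul]
  -- Equation 1: boundedness
  have h1 : ∑ m ∈ f.support, coeff m f * (∏ i, p i ^ m i).coeff (s * (e : ℤ)) = 0 := by
    have := hbound (s * (e : ℤ)) hse
    rw [show (aeval p f : LaurentSeries ℂ) =
        ∑ m ∈ f.support, aeval p (monomial m (coeff m f)) by
      conv_lhs => rw [f.as_sum]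
      rw [map_sum]] at this
    rw [hcoeffsum] at this
    rw [← this]
    exact Finset.sum_congr rfl fun m _ => (hmono m _ _).symm
  -- Euler identity evaluated along the path
  have heuler2 : ∑ i, (C ((w i : ℕ) : ℂ)) * (X i * pderiv i f) =
      ∑ m ∈ f.support, C (((Finsupp.weight w m : ℕ) : ℂ)) * monomial m (coeff m f) := by
    conv_lhs => rw [f.as_sum]
    calc ∑ i, C ((w i : ℕ) : ℂ) * (X i * pderiv i (∑ m ∈ f.support, monomial m (coeff m f)))
        = ∑ i, ∑ m ∈ f.support,
            C ((w i : ℕ) : ℂ) * (X i * pderiv i (monomial m (coeff m f))) := by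
          refine Finset.sum_congr rfl fun i _ => ?_
          rw [map_sum, Finset.mul_sum, Finset.mul_sum]
      _ = ∑ m ∈ f.support, ∑ i,
            C ((w i : ℕ) : ℂ) * (X i * pderiv i (monomial m (coeff m f))) := Finset.sum_comm
      _ = _ := Finset.sum_congr rfl fun m _ => LPLaux.euler_monomial w m _
  have h2 : ∑ m ∈ f.support,
      ((Finsupp.weight w m : ℕ) : ℂ) * (coeff m f * (∏ i, p i ^ m i).coeff (s * (e : ℤ))) = 0 := by
    have h0 : ((aeval p (∑ m ∈ f.support,
        C (((Finsupp.weight w m : ℕ) : ℂ)) * monomial m (coeff m f)) : LaurentSeries ℂ)).coeff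
        (s * (e : ℤ)) = 0 := by
      rw [← heuler2, map_sum]
      have : ∑ i, (aeval p (C ((w i : ℕ) : ℂ) * (X i * pderiv i f)) : LaurentSeries ℂ) = 0 := by
        refine Finset.sum_eq_zero fun i _ => ?_
        rw [map_mul, map_mul, hgrad i, mul_zero, mul_zero]
      rw [this, HahnSeries.coeff_zero]
    rw [map_sum, hcoeffsum] at h0
    rw [← h0]
    refine Finset.sum_congr rfl fun m _ => ?_
    rw [C_mul_monomial, hmono]
    ring
  -- case analysis on weights of monomials in the support
  have hcases : ∀ m ∈ f.support, (Finsupp.weight w m : ℕ) = e ∨ (Finsupp.weight w m : ℕ) = d ∨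
      (Finsupp.weight w m : ℕ) < e := by
    intro m hm
    have hle : (Finsupp.weight w m : ℕ) ≤ d := htop ▸ le_weightedTotalDegree w hm
    by_cases h1' : (Finsupp.weight w m : ℕ) = e
    · exact Or.inl h1'
    by_cases h2' : (Finsupp.weight w m : ℕ) = d
    · exact Or.inr (Or.inl h2')
    right; right
    by_contra hlt
    have hgap' := hgap (Finsupp.weight w m) (by omega) (by omega)
    have hc : coeff m f = 0 := by
      have := congrArg (coeff m) hgap'
      rwa [coeff_weightedHomogeneousComponent, if_pos rfl, coeff_zero] at this
    exact (MvPolynomial.mem_support_iff.mp hm) hc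
  have hTsmall : ∀ m : Fin (n + 1) →₀ ℕ, (Finsupp.weight w m : ℕ) < e →
      (∏ i, p i ^ m i).coeff (s * (e : ℤ)) = 0 := by
    intro m hlt
    refine (key m).1 _ ?_
    have h' : ((Finsupp.weight w m : ℕ) : ℤ) < (e : ℤ) := by exact_mod_cast hlt
    exact mul_lt_mul_of_neg_left h' hs
  -- splitting sums over the support
  have hsplit : ∀ G : (Fin (n + 1) →₀ ℕ) → ℂ, (∀ m ∈ f.support,
      (Finsupp.weight w m : ℕ) < e → G m = 0) →
      ∑ m ∈ f.support, G m =
        (∑ m ∈ f.support with (Finsupp.weight w m : ℕ) = e, G m) +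
        ∑ m ∈ f.support with (Finsupp.weight w m : ℕ) = d, G m := by
    intro G hG
    rw [← Finset.sum_filter_add_sum_filter_not f.support
      (fun m => (Finsupp.weight w m : ℕ) = e) G]
    congr 1
    rw [← Finset.sum_filter_add_sum_filter_not
      (f.support.filter (fun m => ¬(Finsupp.weight w m : ℕ) = e))
      (fun m => (Finsupp.weight w m : ℕ) = d) G, Finset.filter_filter]
    have hA : (∑ m ∈ f.support with (¬(Finsupp.weight w m : ℕ) = e ∧
        (Finsupp.weight w m : ℕ) = d), G m) =
        ∑ m ∈ f.support with (Finsupp.weight w m : ℕ) = d, G m := by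
      apply Finset.sum_congr _ (fun _ _ => rfl)
      apply Finset.filter_congr
      intro m _
      constructor
      · exact fun h => h.2
      · intro h; exact ⟨by omega, h⟩
    have hB : (∑ m ∈ (f.support.filter fun m => ¬(Finsupp.weight w m : ℕ) = e) with
        ¬(Finsupp.weight w m : ℕ) = d, G m) = 0 := by
      refine Finset.sum_eq_zero fun m hm => ?_
      simp only [Finset.mem_filter] at hm
      rcases hcases m hm.1.1 with h | h | h
      · exact absurd h hm.1.2
      · exact absurd h hm.2
      · exact hG m hm.1.1 h
    rw [hA, hB, add_zero]
  -- define the two leading sums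
  set E : ℂ := ∑ m ∈ f.support with (Finsupp.weight w m : ℕ) = e,
    coeff m f * (∏ i, p i ^ m i).coeff (s * (e : ℤ)) with hE
  set D : ℂ := ∑ m ∈ f.support with (Finsupp.weight w m : ℕ) = d,
    coeff m f * (∏ i, p i ^ m i).coeff (s * (e : ℤ)) with hD
  have heq1 : E + D = 0 := by
    rw [← hsplit _ (fun m _ hlt => by rw [hTsmall m hlt, mul_zero])]
    exact h1
  have heq2 : (e : ℂ) * E + (d : ℂ) * D = 0 := by
    rw [hsplit _ (fun m _ hlt => by rw [hTsmall m hlt, mul_zero, mul_zero])] at h2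
    rw [← h2]
    congr 1
    · rw [hE, Finset.mul_sum]
      refine Finset.sum_congr rfl fun m hm => ?_
      rw [(Finset.mem_filter.mp hm).2]
    · rw [hD, Finset.mul_sum]
      refine Finset.sum_congr rfl fun m hm => ?_
      rw [(Finset.mem_filter.mp hm).2]
  -- the target equals E
  have htarget : eval c0 (weightedHomogeneousComponent w e f) = E := by
    rw [weightedHomogeneousComponent_apply, map_sum, hE]
    refine Finset.sum_congr rfl fun m hm => ?_
    have hwm : (Finsupp.weight w m : ℕ) = e := (Finset.mem_filter.mp hm).2
    rw [eval_monomial, Finsupp.prod_pow, ← hwm, (key m).2]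
  rw [htarget]
  have hD' : D = -E := by linear_combination heq1
  have hfin : ((e : ℂ) - d) * E = 0 := by
    rw [hD'] at heq2
    linear_combination heq2
  have hne : ((e : ℂ) - d) ≠ 0 := by
    have hne' : (e : ℂ) ≠ (d : ℂ) := by exact_mod_cast Nat.ne_of_lt hed
    exact sub_ne_zero_of_ne hne'
  exact (mul_eq_zero.mp hfin).resolve_left hne
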